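/- Let C be a category, let F : C → Ab be a functor to the category of abelian groups, let X be an object of C, and let α ∈ F(X) be weakly flexible with respect to F. Then for every finite homogeneous functorial semi-norm |·| on F one has |α| = 0. -/

import Mathlib

open CategoryTheory

universe u v

/-- A finite functorial semi-norm on a functor `F : C ⥤ Ab`: a real-valued
(hence finite) semi-norm on each `F(X)` such that induced maps are
norm-non-increasing. -/
structure FunctorialSeminorm {C : Type u} [Category.{v} C] (F : C ⥤ AddCommGrpCat.{v}) where
  ν : ∀ X : C, F.obj X → ℝ
  nonneg : ∀ (X : C) (x : F.obj X), 0 ≤ ν X x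
  map_zero : ∀ X : C, ν X 0 = 0
  map_neg : ∀ (X : C) (x : F.obj X), ν X (-x) = ν X x
  add_le : ∀ (X : C) (x y : F.obj X), ν X (x + y) ≤ ν X x + ν X y
  functorial : ∀ {X Y : C} (f : X ⟶ Y) (x : F.obj X), ν Y (F.map f x) ≤ ν X x

/-- Homogeneity of a functorial semi-norm. -/
def FunctorialSeminorm.Homogeneous {C : Type u} [Category.{v} C] {F : C ⥤ AddCommGrpCat.{v}}
    (N : FunctorialSeminorm F) : Prop :=
  ∀ (X : C) (n : ℤ), n ≠ 0 → ∀ x : F.obj X, N.ν X (n • x) = |(n : ℝ)| * N.ν X x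

/-- Weakly flexible classes have trivial semi-norm with respect to any finite
homogeneous functorial semi-norm. -/
theorem seminorm_zero_of_weaklyFlexible {C : Type u} [Category.{v} C]
    (F : C ⥤ AddCommGrpCat.{v}) (X : C) (α : F.obj X)
    (hflex : ∃ (Y : C) (β : F.obj Y),
      {d : ℤ | ∃ f : Y ⟶ X, F.map f β = d • α}.Infinite)
    (N : FunctorialSeminorm F) (hN : N.Homogeneous) :
    N.ν X α = 0 := by
  obtain ⟨Y, β, hinf⟩ := hflex
  by_contra h
  have hpos : 0 < N.ν X α := lt_of_le_of_ne (N.nonneg X α) (Ne.symm h)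
  obtain ⟨n, hn⟩ := exists_int_gt (N.ν Y β / N.ν X α)
  -- find d in the infinite set with |d| > max n 0
  have hfin : (Set.Icc (-(max n 0)) (max n 0)).Finite := Set.finite_Icc _ _
  obtain ⟨d, hd, hdnot⟩ := Set.Infinite.exists_notMem_finite hinf hfin
  obtain ⟨f, hf⟩ := hd
  have hdabs : max n 0 < |d| := by
    rcases abs_cases d with ⟨h1, _⟩ | ⟨h1, _⟩ <;>
    · simp only [Set.mem_Icc, not_and_or, not_le] at hdnot
      omega
  have hd0 : d ≠ 0 := by
    intro hc; rw [hc] at hdabs; simp at hdabs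
  have key : |(d:ℝ)| * N.ν X α ≤ N.ν Y β := by
    calc |(d:ℝ)| * N.ν X α = N.ν X (d • α) := (hN X d hd0 α).symm
    _ = N.ν X (F.map f β) := by rw [hf]
    _ ≤ N.ν Y β := N.functorial f β
  have h1 : N.ν Y β / N.ν X α < (n:ℝ) := hn
  have h2 : (n:ℝ) ≤ ((max n 0 : ℤ) : ℝ) := by exact_mod_cast le_max_left n 0
  have h3 : ((max n 0 : ℤ) : ℝ) < |(d:ℝ)| := by
    rw [← Int.cast_abs]; exact_mod_cast hdabs
  have : N.ν Y β / N.ν X α < |(d:ℝ)| := lt_of_lt_of_le h1 (h2.trans h3.le)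
  rw [div_lt_iff₀ hpos] at this
  linarith
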